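/- If f: R → S is an epimorphism in the category of rings and R is commutative, then S is commutative. -/

import Mathlib

open CategoryTheory TensorProduct

universe u

/-- `f : R → S` is an epimorphism in the category of rings. -/
def IsRingEpi {R S : Type u} [Ring R] [Ring S] (f : R →+* S) : Prop :=
  ∀ (T : Type u) [Ring T], ∀ g₁ g₂ : S →+* T, g₁.comp f = g₂.comp f → g₁ = g₂

/-- `Tor_i^R(M, N) = 0`. -/
def TorIsZero (R : Type u) [CommRing R] (i : ℕ)
    (M N : Type u) [AddCommGroup M] [Module R M] [AddCommGroup N] [Module R N] : Prop :=
  Limits.IsZero (((Tor (ModuleCat.{u} R) i).obj (ModuleCat.of R M)).obj (ModuleCat.of R N))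

/-- `R` has weak global dimension at most one: `Tor_2^R` vanishes identically. -/
def WeakGlobalDimLE1 (R : Type u) [CommRing R] : Prop :=
  ∀ M N : ModuleCat.{u} R, Limits.IsZero (((Tor (ModuleCat.{u} R) 2).obj M).obj N)

/-- A homological ring epimorphism: a ring epimorphism with `Tor_i^R(S,S) = 0` for `i ≥ 1`. -/
def IsHomologicalEpi (R S : Type u) [CommRing R] [CommRing S] [Algebra R S] : Prop :=
  IsRingEpi (algebraMap R S) ∧ ∀ i : ℕ, 1 ≤ i → TorIsZero R i S S

section Aux

variable {R S : Type u} [CommRing R] [Ring S]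

/-- `S` as a right `R`-module via `f`, made a left module since `R` is commutative. -/
def Rmod (_f : R →+* S) : Type u := S

/-- `S` as a left `R`-module via `f`. -/
def Lmod (_f : R →+* S) : Type u := S

variable (f : R →+* S)

def rk : S → Rmod f := id
def ru : Rmod f → S := id
def lk : S → Lmod f := id
def lu : Lmod f → S := id

instance : AddCommGroup (Rmod f) := inferInstanceAs (AddCommGroup S)
instance : AddCommGroup (Lmod f) := inferInstanceAs (AddCommGroup S)

lemma ru_rk (s : S) : ru f (rk f s) = s := rfl
lemma rk_ru (x : Rmod f) : rk f (ru f x) = x := rfl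
lemma lu_lk (s : S) : lu f (lk f s) = s := rfl
lemma lk_lu (x : Lmod f) : lk f (lu f x) = x := rfl
lemma rk_add (s t : S) : rk f (s + t) = rk f s + rk f t := rfl
lemma lk_add (s t : S) : lk f (s + t) = lk f s + lk f t := rfl
lemma ru_add (x y : Rmod f) : ru f (x + y) = ru f x + ru f y := rfl
lemma lu_add (x y : Lmod f) : lu f (x + y) = lu f x + lu f y := rfl
lemma ru_zero : ru f 0 = 0 := rfl
lemma lu_zero : lu f 0 = 0 := rfl
lemma rk_zero' : rk f 0 = 0 := rfl
lemma lk_zero' : lk f 0 = 0 := rfl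

instance : Module R (Rmod f) where
  smul r x := rk f (ru f x * f r)
  one_smul x := show rk f (ru f x * f 1) = x by simp [rk_ru, ru_rk, rk_add, ru_add, ru_zero, rk_zero']
  mul_smul r r' x := show rk f (ru f x * f (r * r'))
      = rk f (ru f (rk f (ru f x * f r')) * f r) by
    simp [rk_ru, ru_rk, rk_add, ru_add, ru_zero, rk_zero', mul_comm r r', map_mul, mul_assoc]
  smul_zero r := show rk f (ru f 0 * f r) = 0 by simp [rk_ru, ru_rk, rk_add, ru_add, ru_zero, rk_zero']
  smul_add r x y := show rk f (ru f (x + y) * f r)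
      = rk f (ru f x * f r) + rk f (ru f y * f r) by simp [rk_ru, ru_rk, rk_add, ru_add, ru_zero, rk_zero', add_mul]
  add_smul r r' x := show rk f (ru f x * f (r + r'))
      = rk f (ru f x * f r) + rk f (ru f x * f r') by simp [rk_ru, ru_rk, rk_add, ru_add, ru_zero, rk_zero', map_add, mul_add]
  zero_smul x := show rk f (ru f x * f 0) = 0 by simp [rk_ru, ru_rk, rk_add, ru_add, ru_zero, rk_zero']

instance : Module R (Lmod f) where
  smul r y := lk f (f r * lu f y)
  one_smul y := show lk f (f 1 * lu f y) = y by simp [lk_lu, lu_lk, lk_add, lu_add, lu_zero, lk_zero']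
  mul_smul r r' y := show lk f (f (r * r') * lu f y)
      = lk f (f r * lu f (lk f (f r' * lu f y))) by
    simp [lk_lu, lu_lk, lk_add, lu_add, lu_zero, lk_zero', map_mul, mul_assoc]
  smul_zero r := show lk f (f r * lu f 0) = 0 by simp [lk_lu, lu_lk, lk_add, lu_add, lu_zero, lk_zero']
  smul_add r x y := show lk f (f r * lu f (x + y))
      = lk f (f r * lu f x) + lk f (f r * lu f y) by simp [lk_lu, lu_lk, lk_add, lu_add, lu_zero, lk_zero', mul_add]
  add_smul r r' y := show lk f (f (r + r') * lu f y)
      = lk f (f r * lu f y) + lk f (f r' * lu f y) by simp [lk_lu, lu_lk, lk_add, lu_add, lu_zero, lk_zero', map_add, add_mul]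
  zero_smul y := show lk f (f 0 * lu f y) = 0 by simp [lk_lu, lu_lk, lk_add, lu_add, lu_zero, lk_zero']

@[simp] lemma rk_zero : rk f 0 = 0 := rfl
@[simp] lemma lk_zero : lk f 0 = 0 := rfl
@[simp] lemma smul_rk (r : R) (s : S) : r • rk f s = rk f (s * f r) := rfl
@[simp] lemma smul_lk (r : R) (s : S) : r • lk f s = lk f (f r * s) := rfl

abbrev Mten := TensorProduct R (Rmod f) (Lmod f)

def lmulL (a : S) : Rmod f →ₗ[R] Rmod f where
  toFun x := rk f (a * ru f x)
  map_add' x y := by simp [rk_ru, ru_rk, rk_add, ru_add, ru_zero, mul_add]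
  map_smul' r x := show rk f (a * ru f (rk f (ru f x * f r)))
      = rk f (ru f (rk f (a * ru f x)) * f r) by simp [rk_ru, ru_rk, rk_add, ru_add, ru_zero, mul_assoc]

def rmulL (b : S) : Lmod f →ₗ[R] Lmod f where
  toFun y := lk f (lu f y * b)
  map_add' x y := by simp [lk_lu, lu_lk, lk_add, lu_add, lu_zero, add_mul]
  map_smul' r y := show lk f (lu f (lk f (f r * lu f y)) * b)
      = lk f (f r * lu f (lk f (lu f y * b))) by simp [lk_lu, lu_lk, lk_add, lu_add, lu_zero, mul_assoc]

noncomputable def lmulM (a : S) : Mten f →ₗ[R] Mten f := LinearMap.rTensor (Lmod f) (lmulL f a)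
noncomputable def rmulM (b : S) : Mten f →ₗ[R] Mten f := LinearMap.lTensor (Rmod f) (rmulL f b)

@[simp] lemma lmulM_tmul (a : S) (x : Rmod f) (y : Lmod f) :
    lmulM f a (x ⊗ₜ[R] y) = rk f (a * ru f x) ⊗ₜ[R] y := rfl

@[simp] lemma rmulM_tmul (b : S) (x : Rmod f) (y : Lmod f) :
    rmulM f b (x ⊗ₜ[R] y) = x ⊗ₜ[R] lk f (lu f y * b) := rfl

lemma lmulM_mul (a b : S) (m : Mten f) : lmulM f (a * b) m = lmulM f a (lmulM f b m) := by
  induction m using TensorProduct.induction_on with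
  | zero => simp
  | tmul x y => simp [rk_ru, ru_rk, rk_add, ru_add, ru_zero, mul_assoc]
  | add m n hm hn => simp [map_add, hm, hn]

lemma rmulM_mul (a b : S) (m : Mten f) : rmulM f (a * b) m = rmulM f b (rmulM f a m) := by
  induction m using TensorProduct.induction_on with
  | zero => simp
  | tmul x y => simp [lk_lu, lu_lk, lk_add, lu_add, lu_zero, mul_assoc]
  | add m n hm hn => simp [map_add, hm, hn]

lemma lr_comm (a b : S) (m : Mten f) : lmulM f a (rmulM f b m) = rmulM f b (lmulM f a m) := by
  induction m using TensorProduct.induction_on with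
  | zero => simp
  | tmul x y => simp
  | add m n hm hn => simp [map_add, hm, hn]

lemma lmulM_one (m : Mten f) : lmulM f 1 m = m := by
  induction m using TensorProduct.induction_on with
  | zero => simp
  | tmul x y => simp [rk_ru, ru_rk, rk_add, ru_add, ru_zero]
  | add m n hm hn => simp [map_add, hm, hn]

lemma rmulM_one (m : Mten f) : rmulM f 1 m = m := by
  induction m using TensorProduct.induction_on with
  | zero => simp
  | tmul x y => simp [lk_lu, lu_lk, lk_add, lu_add, lu_zero]
  | add m n hm hn => simp [map_add, hm, hn]

lemma lmulM_addS (a b : S) (m : Mten f) :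
    lmulM f (a + b) m = lmulM f a m + lmulM f b m := by
  induction m using TensorProduct.induction_on with
  | zero => simp
  | tmul x y => simp [rk_ru, ru_rk, rk_add, ru_add, ru_zero, add_mul, add_tmul]
  | add m n hm hn => simp only [map_add, hm, hn]; abel

lemma rmulM_addS (a b : S) (m : Mten f) :
    rmulM f (a + b) m = rmulM f a m + rmulM f b m := by
  induction m using TensorProduct.induction_on with
  | zero => simp
  | tmul x y => simp [lk_lu, lu_lk, lk_add, lu_add, lu_zero, mul_add, tmul_add]
  | add m n hm hn => simp only [map_add, hm, hn]; abel

lemma lmulM_zeroS (m : Mten f) : lmulM f 0 m = 0 := by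
  induction m using TensorProduct.induction_on with
  | zero => simp
  | tmul x y => simp [rk_ru, ru_rk, rk_add, ru_add, ru_zero]
  | add m n hm hn => simp [map_add, hm, hn]

lemma rmulM_zeroS (m : Mten f) : rmulM f 0 m = 0 := by
  induction m using TensorProduct.induction_on with
  | zero => simp
  | tmul x y => simp [lk_lu, lu_lk, lk_add, lu_add, lu_zero]
  | add m n hm hn => simp [map_add, hm, hn]

noncomputable instance instMulT : Mul (S × Mten f) :=
  ⟨fun p q => (p.1 * q.1, lmulM f p.1 q.2 + rmulM f q.1 p.2)⟩

noncomputable instance instOneT : One (S × Mten f) := ⟨((1 : S), 0)⟩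

lemma mulT_def (p q : S × Mten f) :
    p * q = (p.1 * q.1, lmulM f p.1 q.2 + rmulM f q.1 p.2) := rfl

noncomputable instance : Ring (S × Mten f) :=
  { (inferInstance : AddCommGroup (S × Mten f)), instMulT f, instOneT f with
    left_distrib := fun p q r => by
      refine Prod.ext (mul_add _ _ _) ?_
      show lmulM f p.1 (q.2 + r.2) + rmulM f (q.1 + r.1) p.2
          = (lmulM f p.1 q.2 + rmulM f q.1 p.2) + (lmulM f p.1 r.2 + rmulM f r.1 p.2)
      rw [map_add, rmulM_addS]; abel
    right_distrib := fun p q r => by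
      refine Prod.ext (add_mul _ _ _) ?_
      show lmulM f (p.1 + q.1) r.2 + rmulM f r.1 (p.2 + q.2)
          = (lmulM f p.1 r.2 + rmulM f r.1 p.2) + (lmulM f q.1 r.2 + rmulM f r.1 q.2)
      rw [map_add, lmulM_addS]; abel
    zero_mul := fun p => by
      refine Prod.ext (zero_mul _) ?_
      show lmulM f 0 p.2 + rmulM f p.1 0 = 0
      simp [lmulM_zeroS]
    mul_zero := fun p => by
      refine Prod.ext (mul_zero _) ?_
      show lmulM f p.1 0 + rmulM f 0 p.2 = 0
      simp [rmulM_zeroS]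
    mul_assoc := fun p q r => by
      refine Prod.ext (mul_assoc _ _ _) ?_
      show lmulM f (p.1 * q.1) r.2 + rmulM f r.1 (lmulM f p.1 q.2 + rmulM f q.1 p.2)
          = lmulM f p.1 (lmulM f q.1 r.2 + rmulM f r.1 q.2) + rmulM f (q.1 * r.1) p.2
      rw [map_add, map_add, lmulM_mul, rmulM_mul, lr_comm]; abel
    one_mul := fun p => by
      refine Prod.ext (one_mul _) ?_
      show lmulM f 1 p.2 + rmulM f p.1 0 = p.2
      simp [lmulM_one]
    mul_one := fun p => by
      refine Prod.ext (mul_one _) ?_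
      show lmulM f p.1 0 + rmulM f 1 p.2 = p.2
      simp [rmulM_one] }

noncomputable def dd (s : S) : Mten f := rk f s ⊗ₜ[R] lk f 1 - rk f 1 ⊗ₜ[R] lk f s

noncomputable def g1 : S →+* S × Mten f where
  toFun s := (s, dd f s)
  map_one' := by
    show ((1 : S), dd f 1) = ((1 : S), (0 : Mten f))
    refine Prod.ext rfl ?_; simp [dd]
  map_mul' s t := by
    refine Prod.ext rfl ?_
    show dd f (s * t) = lmulM f s (dd f t) + rmulM f t (dd f s)
    simp only [dd, map_sub, lmulM_tmul, rmulM_tmul, ru_rk, lu_lk, mul_one, one_mul]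
    abel
  map_zero' := by
    show ((0 : S), dd f 0) = ((0 : S), (0 : Mten f))
    refine Prod.ext rfl ?_; simp [dd]
  map_add' s t := by
    refine Prod.ext rfl ?_
    show dd f (s + t) = dd f s + dd f t
    simp only [dd]
    rw [show rk f (s + t) = rk f s + rk f t from rfl,
      show lk f (s + t) = lk f s + lk f t from rfl, add_tmul, tmul_add]
    abel

noncomputable def g2 : S →+* S × Mten f where
  toFun s := (s, 0)
  map_one' := rfl
  map_mul' s t := by
    refine Prod.ext rfl ?_
    show (0 : Mten f) = lmulM f s 0 + rmulM f t 0
    simp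
  map_zero' := rfl
  map_add' s t := Prod.ext rfl (by simp)

lemma tensor_comm_key (hf : IsRingEpi f) (s : S) :
    (rk f s ⊗ₜ[R] lk f 1 : Mten f) = rk f 1 ⊗ₜ[R] lk f s := by
  have h : g1 f = g2 f := by
    apply hf (S × Mten f) (g1 f) (g2 f)
    refine RingHom.ext fun r => ?_
    show ((f r, dd f (f r)) : S × Mten f) = (f r, (0 : Mten f))
    refine Prod.ext rfl ?_
    show dd f (f r) = 0
    rw [dd, sub_eq_zero]
    calc rk f (f r) ⊗ₜ[R] lk f 1 = (r • rk f 1) ⊗ₜ[R] lk f 1 := by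
          rw [smul_rk, one_mul]
      _ = rk f 1 ⊗ₜ[R] (r • lk f 1) := TensorProduct.smul_tmul _ _ _
      _ = rk f 1 ⊗ₜ[R] lk f (f r) := by rw [smul_lk, mul_one]
  have h2 := congrArg (fun g : S →+* S × Mten f => (g s).2) h
  simpa [g1, g2, dd, sub_eq_zero] using h2

noncomputable def phi (c : S) (hc : ∀ r : R, f r * c = c * f r) : Mten f →+ S :=
  TensorProduct.liftAddHom
    (AddMonoidHom.mk'
      (fun x => AddMonoidHom.mk' (fun y => ru f x * c * lu f y)
        (fun y y' => by simp [lu_add, mul_add]))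
      (fun x x' => by ext y; simp [ru_add, add_mul]))
    (fun r x y => by
      show (ru f x * f r) * c * lu f y = ru f x * c * (f r * lu f y)
      rw [mul_assoc (ru f x) (f r) c, hc r, ← mul_assoc (ru f x) c (f r),
        mul_assoc (ru f x * c) (f r) (lu f y)])

@[simp] lemma phi_tmul (c : S) (hc : ∀ r : R, f r * c = c * f r) (x : Rmod f) (y : Lmod f) :
    phi f c hc (x ⊗ₜ[R] y) = ru f x * c * lu f y :=
  TensorProduct.liftAddHom_tmul _ _ _ _

end Aux

/-- If `f : R → S` is a ring epimorphism and `R` is commutative then `S` is commutative. -/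
theorem stmt3 (R S : Type u) [CommRing R] [Ring S] (f : R →+* S) (hf : IsRingEpi f) :
    ∀ a b : S, a * b = b * a := by
  intro a b
  have key := tensor_comm_key f hf
  have central : ∀ (r : R) (s : S), f r * s = s * f r := by
    intro r s
    have hc : ∀ r' : R, f r' * f r = f r * f r' := fun r' => by
      rw [← map_mul, ← map_mul, mul_comm]
    have h := congrArg (phi f (f r) hc) (key s)
    simpa [ru_rk, lu_lk] using h.symm
  have hc : ∀ r : R, f r * b = b * f r := fun r => central r b
  have h := congrArg (phi f b hc) (key a)
  simpa [ru_rk, lu_lk] using h
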